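/- Misclassification probability for the nearest-hypothesis rule (core of the clustering Lemma): Let n be a positive integer, S > 0, μ, a, b ∈ ℝⁿ with ‖b − μ‖₂ ≤ S/100 and ‖a − μ‖₂ ≥ S/20, and let X be distributed as N(μ, I) on ℝⁿ. Then Pr[ ‖X − a‖₂ ≤ ‖X − b‖₂ ] ≤ exp(−S²/20000). -/

import Mathlib

set_option maxHeartbeats 1000000


open MeasureTheory

/-- The Gaussian measure `N(μ, I)` on `ℝⁿ`, given by its density with respect to
Lebesgue measure. -/
noncomputable def stdGaussian (n : ℕ) (μ : EuclideanSpace ℝ (Fin n)) :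
    Measure (EuclideanSpace ℝ (Fin n)) :=
  volume.withDensity fun x =>
    ENNReal.ofReal ((2 * Real.pi) ^ (-(n : ℝ) / 2) * Real.exp (-‖x - μ‖ ^ 2 / 2))

open Real
open scoped RealInnerProductSpace

lemma gauss_integrable (n : ℕ) :
    Integrable (fun x : EuclideanSpace ℝ (Fin n) => Real.exp (-‖x‖ ^ 2 / 2)) := by
  have h := GaussianFourier.integrable_cexp_neg_mul_sq_norm_add (V := EuclideanSpace ℝ (Fin n))
      (b := (1/2 : ℂ)) (by norm_num) 0 0
  simp only [zero_mul, add_zero] at h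
  have h2 := h.norm
  refine h2.congr (Filter.Eventually.of_forall fun x => ?_)
  simp only [Complex.norm_exp]
  congr 1
  have : ((-(1/2 : ℂ)) * (‖x‖ : ℂ) ^ 2) = ((-‖x‖ ^ 2 / 2 : ℝ) : ℂ) := by push_cast; ring
  rw [this, Complex.ofReal_re]

lemma gauss_lintegral (n : ℕ) (ν : EuclideanSpace ℝ (Fin n)) :
    ∫⁻ x, ENNReal.ofReal ((2 * Real.pi) ^ (-(n : ℝ) / 2) * Real.exp (-‖x - ν‖ ^ 2 / 2)) = 1 := by
  have htrans : ∫⁻ x, ENNReal.ofReal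
        ((2 * Real.pi) ^ (-(n : ℝ) / 2) * Real.exp (-‖x - ν‖ ^ 2 / 2))
      = ∫⁻ x : EuclideanSpace ℝ (Fin n), ENNReal.ofReal
        ((2 * Real.pi) ^ (-(n : ℝ) / 2) * Real.exp (-‖x‖ ^ 2 / 2)) :=
    lintegral_sub_right_eq_self
      (fun x => ENNReal.ofReal ((2 * Real.pi) ^ (-(n : ℝ) / 2) * Real.exp (-‖x‖ ^ 2 / 2))) ν
  rw [htrans]
  have hint : Integrable (fun x : EuclideanSpace ℝ (Fin n) =>
      (2 * Real.pi) ^ (-(n : ℝ) / 2) * Real.exp (-‖x‖ ^ 2 / 2)) :=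
    (gauss_integrable n).const_mul _
  rw [← ofReal_integral_eq_lintegral_ofReal hint
      (Filter.Eventually.of_forall fun x => by positivity)]
  rw [integral_const_mul]
  have hval : ∫ x : EuclideanSpace ℝ (Fin n), Real.exp (-‖x‖ ^ 2 / 2)
      = (2 * Real.pi) ^ ((n : ℝ) / 2) := by
    have h := GaussianFourier.integral_rexp_neg_mul_sq_norm (V := EuclideanSpace ℝ (Fin n))
        (b := (1/2 : ℝ)) (by norm_num)
    have heq : ∀ x : EuclideanSpace ℝ (Fin n),
        Real.exp (-(1/2 : ℝ) * ‖x‖ ^ 2) = Real.exp (-‖x‖ ^ 2 / 2) := fun x => by ring_nf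
    rw [show (fun v : EuclideanSpace ℝ (Fin n) => rexp (-(1/2 : ℝ) * ‖v‖ ^ 2))
        = (fun v : EuclideanSpace ℝ (Fin n) => rexp (-‖v‖ ^ 2 / 2)) from funext heq] at h
    rw [h, finrank_euclideanSpace_fin]
    norm_num
    congr 1
    ring
  rw [hval, ← Real.rpow_add (by positivity), neg_div, neg_add_cancel, Real.rpow_zero,
    ENNReal.ofReal_one]

lemma gauss_density_meas (n : ℕ) (ν : EuclideanSpace ℝ (Fin n)) :
    Measurable (fun x : EuclideanSpace ℝ (Fin n) =>
      ENNReal.ofReal ((2 * Real.pi) ^ (-(n : ℝ) / 2) * Real.exp (-‖x - ν‖ ^ 2 / 2))) := by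
  apply Measurable.ennreal_ofReal
  fun_prop

/-- Misclassification probability for the nearest-hypothesis rule: if `‖b - μ‖ ≤ S/100` and
`‖a - μ‖ ≥ S/20`, then for `X ~ N(μ, I)`, `Pr[‖X - a‖ ≤ ‖X - b‖] ≤ exp(-S²/20000)`. -/
theorem stmt_12 (n : ℕ) (hn : 0 < n) (S : ℝ) (hS : 0 < S)
    (μ a b : EuclideanSpace ℝ (Fin n))
    (hb : ‖b - μ‖ ≤ S / 100) (ha : S / 20 ≤ ‖a - μ‖) :
    stdGaussian n μ {x | ‖x - a‖ ≤ ‖x - b‖} ≤ ENNReal.ofReal (Real.exp (-S ^ 2 / 20000)) := by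
  classical
  set u := a - μ with hu_def
  set w := b - μ with hw_def
  have hu : S / 20 ≤ ‖u‖ := ha
  have hw : ‖w‖ ≤ S / 100 := hb
  have hwu : ‖w‖ < ‖u‖ := lt_of_le_of_lt hw (by linarith)
  set v := u - w with hv_def
  have hvne : v ≠ 0 := by
    intro h
    have : u = w := sub_eq_zero.mp h
    rw [this] at hwu; exact lt_irrefl _ hwu
  have hvnorm : 0 < ‖v‖ := norm_pos_iff.mpr hvne
  have hvle : ‖v‖ ≤ ‖u‖ + ‖w‖ := norm_sub_le u w
  set c : ℝ := (‖u‖ ^ 2 - ‖w‖ ^ 2) / (2 * ‖v‖) with hc_def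
  set e : EuclideanSpace ℝ (Fin n) := (‖v‖)⁻¹ • v with he_def
  have he_norm : ‖e‖ = 1 := by
    rw [he_def, norm_smul, norm_inv, norm_norm, inv_mul_cancel₀ (ne_of_gt hvnorm)]
  have hc_lb : (‖u‖ - ‖w‖) / 2 ≤ c := by
    rw [hc_def]
    rw [div_le_div_iff₀ (by norm_num) (by positivity)]
    have : ‖u‖ ^ 2 - ‖w‖ ^ 2 = (‖u‖ - ‖w‖) * (‖u‖ + ‖w‖) := by ring
    nlinarith [norm_nonneg w, norm_nonneg u]
  have hcS : S / 50 ≤ c := le_trans (by linarith) hc_lb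
  have hc_pos : 0 < c := lt_of_lt_of_le (by positivity) hcS
  -- the tilted center
  set ν : EuclideanSpace ℝ (Fin n) := μ + c • e with hν_def
  -- pointwise inequality on the event
  have key : ∀ x : EuclideanSpace ℝ (Fin n), ‖x - a‖ ≤ ‖x - b‖ →
      (2 * Real.pi) ^ (-(n : ℝ) / 2) * Real.exp (-‖x - μ‖ ^ 2 / 2)
        ≤ Real.exp (-c ^ 2 / 2) *
          ((2 * Real.pi) ^ (-(n : ℝ) / 2) * Real.exp (-‖x - ν‖ ^ 2 / 2)) := by
    intro x hx
    set g := x - μ with hg_def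
    have hxa : x - a = g - u := by rw [hg_def, hu_def]; abel
    have hxb : x - b = g - w := by rw [hg_def, hw_def]; abel
    have hsq : ‖g - u‖ ^ 2 ≤ ‖g - w‖ ^ 2 := by
      rw [← hxa, ← hxb]
      exact pow_le_pow_left₀ (norm_nonneg _) hx 2
    have hexp_u : ‖g - u‖ ^ 2 = ‖g‖ ^ 2 - 2 * ⟪g, u⟫ + ‖u‖ ^ 2 := by
      rw [@norm_sub_sq_real]
    have hexp_w : ‖g - w‖ ^ 2 = ‖g‖ ^ 2 - 2 * ⟪g, w⟫ + ‖w‖ ^ 2 := by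
      rw [@norm_sub_sq_real]
    have hgv : (‖u‖ ^ 2 - ‖w‖ ^ 2) / 2 ≤ ⟪g, v⟫ := by
      have : ⟪g, v⟫ = ⟪g, u⟫ - ⟪g, w⟫ := by rw [hv_def, inner_sub_right]
      nlinarith
    have hge : c ≤ ⟪g, e⟫ := by
      have hinner : ⟪g, e⟫ = (‖v‖)⁻¹ * ⟪g, v⟫ := by
        rw [he_def, real_inner_smul_right]
      rw [hinner, hc_def]
      have h3 : (‖u‖ ^ 2 - ‖w‖ ^ 2) / (2 * ‖v‖) = ‖v‖⁻¹ * ((‖u‖ ^ 2 - ‖w‖ ^ 2) / 2) := by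
        rw [inv_mul_eq_div, div_div]
      rw [h3]
      exact mul_le_mul_of_nonneg_left hgv (by positivity)
    -- norm expansion of x - ν
    have hxν : x - ν = g - c • e := by rw [hg_def, hν_def]; abel
    have hnν : ‖x - ν‖ ^ 2 = ‖g‖ ^ 2 - 2 * c * ⟪g, e⟫ + c ^ 2 := by
      rw [hxν, @norm_sub_sq_real, real_inner_smul_right, norm_smul]
      rw [Real.norm_eq_abs, abs_of_pos hc_pos]
      rw [mul_pow, he_norm]
      ring
    have hexp_le : -‖g‖ ^ 2 / 2 ≤ -c ^ 2 / 2 + -‖x - ν‖ ^ 2 / 2 := by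
      rw [hnν]
      nlinarith
    calc (2 * Real.pi) ^ (-(n : ℝ) / 2) * Real.exp (-‖x - μ‖ ^ 2 / 2)
        = (2 * Real.pi) ^ (-(n : ℝ) / 2) * Real.exp (-‖g‖ ^ 2 / 2) := by rw [hg_def]
      _ ≤ (2 * Real.pi) ^ (-(n : ℝ) / 2) *
            (Real.exp (-c ^ 2 / 2) * Real.exp (-‖x - ν‖ ^ 2 / 2)) := by
          apply mul_le_mul_of_nonneg_left _ (by positivity)
          rw [← Real.exp_add]
          exact Real.exp_le_exp.mpr hexp_le
      _ = Real.exp (-c ^ 2 / 2) *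
            ((2 * Real.pi) ^ (-(n : ℝ) / 2) * Real.exp (-‖x - ν‖ ^ 2 / 2)) := by ring
  -- measurable event
  have hE : MeasurableSet {x : EuclideanSpace ℝ (Fin n) | ‖x - a‖ ≤ ‖x - b‖} := by
    apply measurableSet_le <;> fun_prop
  rw [stdGaussian, withDensity_apply _ hE]
  calc ∫⁻ x in {x | ‖x - a‖ ≤ ‖x - b‖},
        ENNReal.ofReal ((2 * Real.pi) ^ (-(n : ℝ) / 2) * Real.exp (-‖x - μ‖ ^ 2 / 2))
      ≤ ∫⁻ x in {x | ‖x - a‖ ≤ ‖x - b‖},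
          ENNReal.ofReal (Real.exp (-c ^ 2 / 2)) *
            ENNReal.ofReal ((2 * Real.pi) ^ (-(n : ℝ) / 2) * Real.exp (-‖x - ν‖ ^ 2 / 2)) := by
        apply setLIntegral_mono
          ((gauss_density_meas n ν).const_mul _)
        intro x hx
        rw [← ENNReal.ofReal_mul (by positivity)]
        exact ENNReal.ofReal_le_ofReal (key x hx)
    _ ≤ ∫⁻ x, ENNReal.ofReal (Real.exp (-c ^ 2 / 2)) *
          ENNReal.ofReal ((2 * Real.pi) ^ (-(n : ℝ) / 2) * Real.exp (-‖x - ν‖ ^ 2 / 2)) :=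
        setLIntegral_le_lintegral _ _
    _ = ENNReal.ofReal (Real.exp (-c ^ 2 / 2)) *
          ∫⁻ x, ENNReal.ofReal ((2 * Real.pi) ^ (-(n : ℝ) / 2) * Real.exp (-‖x - ν‖ ^ 2 / 2)) :=
        lintegral_const_mul _ (gauss_density_meas n ν)
    _ = ENNReal.ofReal (Real.exp (-c ^ 2 / 2)) := by rw [gauss_lintegral n ν, mul_one]
    _ ≤ ENNReal.ofReal (Real.exp (-S ^ 2 / 20000)) := by
        apply ENNReal.ofReal_le_ofReal
        apply Real.exp_le_exp.mpr
        have h1 : S / 50 ≤ c := hcS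
        nlinarith
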